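/- Let {A_i}_{i∈S}, {C_i}_{i∈S} be finite families with A_i ∈ ℝ^{n×n}, C_i ∈ ℝ^{n_y×n}. Suppose there exist matrices L_i ∈ ℝ^{n×n_y}, diagonal positive definite matrices P_i ∈ ℝ^{n×n} with nonnegative entries, and γ > 0 such that |A_i − L_i C_i|ᵀ P_j |A_i − L_i C_i| − P_i ⪯ −γ I for all pairs (i,j) ∈ S². Then the finite set {|A_i − L_i C_i| : i ∈ S} is uniformly exponentially stable, i.e., its joint spectral radius is strictly less than 1. -/

import Mathlib

open Matrix Finset

noncomputable section

/-- Entrywise absolute value of a matrix. -/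
def entAbs {m n : Type*} (A : Matrix m n ℝ) : Matrix m n ℝ := fun i j => |A i j|

/-- Frobenius norm of a real matrix. -/
def frob {m n : Type*} [Fintype m] [Fintype n] (A : Matrix m n ℝ) : ℝ :=
  Real.sqrt (∑ i, ∑ j, (A i j) ^ 2)

/-- Joint spectral radius of a set of real square matrices (via the Frobenius norm). -/
def jsr {n : Type*} [Fintype n] [DecidableEq n] (S : Set (Matrix n n ℝ)) : ℝ :=
  Filter.limsup (fun k : ℕ =>
    (sSup {x : ℝ | ∃ L : List (Matrix n n ℝ), L.length = k ∧ (∀ A ∈ L, A ∈ S) ∧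
      x = frob L.prod}) ^ ((1:ℝ) / k)) Filter.atTop

lemma limsup_lt_one_of_eventually_le {f : ℕ → ℝ} {r : ℝ} (hr : r < 1)
    (h0 : ∀ k, 0 ≤ f k) (h : ∀ᶠ k in Filter.atTop, f k ≤ r) :
    Filter.limsup f Filter.atTop < 1 :=
  lt_of_le_of_lt (Filter.limsup_le_of_le
    (Filter.isCoboundedUnder_le_of_eventually_le _
      (Filter.Eventually.of_forall h0)) h) hr

theorem switched_lyapunov_jsr_lt_one {n ny : ℕ} {ι : Type*} [Fintype ι]
    (A : ι → Matrix (Fin n) (Fin n) ℝ) (C : ι → Matrix (Fin ny) (Fin n) ℝ)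
    (L : ι → Matrix (Fin n) (Fin ny) ℝ) (P : ι → Matrix (Fin n) (Fin n) ℝ)
    (γ : ℝ) (hγ : 0 < γ)
    (hPdiag : ∀ i, (P i).IsDiag) (hPdef : ∀ i, (P i).PosDef)
    (hPnn : ∀ i a b, 0 ≤ P i a b)
    (hlyap : ∀ i j, (P i - γ • (1 : Matrix (Fin n) (Fin n) ℝ) -
      (entAbs (A i - L i * C i))ᵀ * P j * entAbs (A i - L i * C i)).PosSemidef) :
    jsr (Set.range fun i => entAbs (A i - L i * C i)) < 1 := by
  classical
  unfold jsr
  set M : ι → Matrix (Fin n) (Fin n) ℝ := fun i => entAbs (A i - L i * C i) with hMdef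
  -- degenerate case n = 0
  rcases Nat.eq_zero_or_pos n with hn0 | hn
  · subst hn0
    refine limsup_lt_one_of_eventually_le (r := 0) one_pos
      (fun k => Real.rpow_nonneg
      (Real.sSup_nonneg (by rintro x ⟨L', -, -, rfl⟩; exact Real.sqrt_nonneg _)) _) ?_
    filter_upwards [Filter.eventually_ge_atTop 1] with k hk
    have h0 : sSup {x : ℝ | ∃ L' : List (Matrix (Fin 0) (Fin 0) ℝ), L'.length = k ∧
        (∀ B ∈ L', B ∈ Set.range M) ∧ x = frob L'.prod} = 0 := by
      apply le_antisymm
      · refine Real.sSup_le ?_ le_rfl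
        rintro x ⟨L', -, -, rfl⟩
        simp [frob]
      · exact Real.sSup_nonneg (by rintro x ⟨L', -, -, rfl⟩; exact Real.sqrt_nonneg _)
    rw [h0, Real.zero_rpow (one_div_ne_zero (Nat.cast_ne_zero.2 (by omega)))]
  -- degenerate case ι empty
  rcases isEmpty_or_nonempty ι with hι | hι
  · refine limsup_lt_one_of_eventually_le (r := 0) one_pos
      (fun k => Real.rpow_nonneg
      (Real.sSup_nonneg (by rintro x ⟨L', -, -, rfl⟩; exact Real.sqrt_nonneg _)) _) ?_
    filter_upwards [Filter.eventually_ge_atTop 1] with k hk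
    have h0 : {x : ℝ | ∃ L' : List (Matrix (Fin n) (Fin n) ℝ), L'.length = k ∧
        (∀ B ∈ L', B ∈ Set.range M) ∧ x = frob L'.prod} = ∅ := by
      ext x
      simp only [Set.mem_setOf_eq, Set.mem_empty_iff_false, iff_false]
      rintro ⟨L', hlen, hmem, -⟩
      have hne : L' ≠ [] := by intro h; rw [h] at hlen; simp at hlen; omega
      obtain ⟨B, hB⟩ := List.exists_mem_of_ne_nil L' hne
      obtain ⟨i, -⟩ := hmem B hB
      exact hι.elim i
    rw [h0, Real.sSup_empty, Real.zero_rpow (one_div_ne_zero (Nat.cast_ne_zero.2 (by omega)))]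
  -- main case
  haveI : Nonempty (Fin n) := ⟨⟨0, hn⟩⟩
  set pmax : ℝ := univ.sup' univ_nonempty
    (fun i : ι => univ.sup' univ_nonempty fun a : Fin n => P i a a) with hpmaxdef
  set pmin : ℝ := univ.inf' univ_nonempty
    (fun i : ι => univ.inf' univ_nonempty fun a : Fin n => P i a a) with hpmindef
  have hdiagpos : ∀ i a, 0 < P i a a := by
    intro i a
    have hne : (Pi.single a 1 : Fin n → ℝ) ≠ 0 := by
      intro h
      have := congrFun h a
      simp at this
    have h := (hPdef i).dotProduct_mulVec_pos (x := Pi.single a 1) hne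
    simpa [dotProduct, Matrix.mulVec, Pi.single_apply, mul_ite, ite_mul] using h
  have hle_pmax : ∀ i a, P i a a ≤ pmax := by
    intro i a
    exact le_trans (Finset.le_sup' (fun b => P i b b) (mem_univ a))
      (Finset.le_sup' (fun j : ι => univ.sup' univ_nonempty fun b : Fin n => P j b b) (mem_univ i))
  have hpmin_le : ∀ i a, pmin ≤ P i a a := by
    intro i a
    exact le_trans
      (Finset.inf'_le (fun j : ι => univ.inf' univ_nonempty fun b : Fin n => P j b b) (mem_univ i))
      (Finset.inf'_le (fun b => P i b b) (mem_univ a))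
  obtain ⟨i₀⟩ := hι
  have hpmax_pos : 0 < pmax := lt_of_lt_of_le (hdiagpos i₀ ⟨0, hn⟩) (hle_pmax i₀ ⟨0, hn⟩)
  have hpmin_pos : 0 < pmin := by
    rw [hpmindef, Finset.lt_inf'_iff]
    intro i _
    rw [Finset.lt_inf'_iff]
    intro a _
    exact hdiagpos i a
  -- quadratic form facts
  have hVeq : ∀ (i : ι) (x : Fin n → ℝ), x ⬝ᵥ (P i) *ᵥ x = ∑ a, P i a a * x a ^ 2 := by
    intro i x
    simp only [dotProduct, Matrix.mulVec]
    refine Finset.sum_congr rfl fun a _ => ?_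
    rw [Finset.sum_eq_single a (fun b _ hb => by rw [hPdiag i (Ne.symm hb), zero_mul]) (by simp)]
    ring
  have hVle : ∀ (i : ι) (x : Fin n → ℝ), x ⬝ᵥ (P i) *ᵥ x ≤ pmax * ∑ a, x a ^ 2 := by
    intro i x
    rw [hVeq, Finset.mul_sum]
    exact Finset.sum_le_sum fun a _ => mul_le_mul_of_nonneg_right (hle_pmax i a) (sq_nonneg _)
  have hVge : ∀ (i : ι) (x : Fin n → ℝ), pmin * ∑ a, x a ^ 2 ≤ x ⬝ᵥ (P i) *ᵥ x := by
    intro i x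
    rw [hVeq, Finset.mul_sum]
    exact Finset.sum_le_sum fun a _ => mul_le_mul_of_nonneg_right (hpmin_le i a) (sq_nonneg _)
  have hVnonneg : ∀ (i : ι) (x : Fin n → ℝ), 0 ≤ x ⬝ᵥ (P i) *ᵥ x := by
    intro i x
    refine le_trans ?_ (hVge i x)
    positivity
  set c' : ℝ := max (1 - γ / pmax) 0 with hc'def
  have hc'0 : 0 ≤ c' := le_max_right _ _
  have hc'1 : c' < 1 := by
    apply max_lt _ one_pos
    have := div_pos hγ hpmax_pos
    linarith
  -- key decrease inequality
  have key : ∀ (i j : ι) (x : Fin n → ℝ),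
      (M i *ᵥ x) ⬝ᵥ (P j) *ᵥ (M i *ᵥ x) ≤ c' * (x ⬝ᵥ (P i) *ᵥ x) := by
    intro i j x
    have h := (hlyap i j).dotProduct_mulVec_nonneg x
    rw [star_trivial] at h
    have hexp : x ⬝ᵥ ((P i - γ • 1 - (M i)ᵀ * P j * M i) *ᵥ x)
        = x ⬝ᵥ (P i) *ᵥ x - γ * ∑ a, x a ^ 2
          - (M i *ᵥ x) ⬝ᵥ (P j) *ᵥ (M i *ᵥ x) := by
      rw [Matrix.sub_mulVec, Matrix.sub_mulVec, dotProduct_sub, dotProduct_sub]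
      congr 1
      · congr 1
        rw [Matrix.smul_mulVec, Matrix.one_mulVec, dotProduct_smul, smul_eq_mul]
        congr 1
        simp [dotProduct, pow_two]
      · rw [← Matrix.mulVec_mulVec, ← Matrix.mulVec_mulVec,
          Matrix.dotProduct_mulVec x ((M i)ᵀ), Matrix.vecMul_transpose,
          Matrix.mulVec_mulVec]
    rw [hexp] at h
    have h1 : x ⬝ᵥ (P i) *ᵥ x ≤ pmax * ∑ a, x a ^ 2 := hVle i x
    have h2 : (γ / pmax) * (x ⬝ᵥ (P i) *ᵥ x) ≤ γ * ∑ a, x a ^ 2 := by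
      have := mul_le_mul_of_nonneg_left h1 (le_of_lt (div_pos hγ hpmax_pos))
      calc (γ / pmax) * (x ⬝ᵥ (P i) *ᵥ x) ≤ (γ / pmax) * (pmax * ∑ a, x a ^ 2) := this
        _ = γ * ∑ a, x a ^ 2 := by field_simp
    have h3 : (1 - γ / pmax) * (x ⬝ᵥ (P i) *ᵥ x) ≤ c' * (x ⬝ᵥ (P i) *ᵥ x) :=
      mul_le_mul_of_nonneg_right (le_max_left _ _) (hVnonneg i x)
    nlinarith [hVnonneg i x]
  -- chained decrease along arbitrary products
  have chain : ∀ (Ls : List (Matrix (Fin n) (Fin n) ℝ)), (∀ B ∈ Ls, B ∈ Set.range M) →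
      ∀ (j : ι) (x : Fin n → ℝ),
      (Ls.prod *ᵥ x) ⬝ᵥ (P j) *ᵥ (Ls.prod *ᵥ x) ≤ c' ^ Ls.length * (pmax * ∑ a, x a ^ 2) := by
    intro Ls
    induction Ls with
    | nil =>
      intro _ j x
      simpa [Matrix.one_mulVec] using hVle j x
    | cons B t ih =>
      intro hmem j x
      obtain ⟨i, hi⟩ := hmem B List.mem_cons_self
      have ht := ih (fun B' hB' => hmem B' (List.mem_cons_of_mem _ hB')) i x
      rw [List.prod_cons, ← Matrix.mulVec_mulVec]
      calc (B *ᵥ (t.prod *ᵥ x)) ⬝ᵥ (P j) *ᵥ (B *ᵥ (t.prod *ᵥ x))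
          ≤ c' * ((t.prod *ᵥ x) ⬝ᵥ (P i) *ᵥ (t.prod *ᵥ x)) := by rw [← hi]; exact key i j _
        _ ≤ c' * (c' ^ t.length * (pmax * ∑ a, x a ^ 2)) := mul_le_mul_of_nonneg_left ht hc'0
        _ = c' ^ (B :: t).length * (pmax * ∑ a, x a ^ 2) := by
            rw [List.length_cons, pow_succ]; ring
  -- Frobenius norm bound
  set d : ℝ := Real.sqrt c' with hddef
  set K : ℝ := Real.sqrt ((n : ℝ) * pmax / pmin) with hKdef
  have hd0 : 0 ≤ d := Real.sqrt_nonneg _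
  have hd1 : d < 1 := by
    have hsq : d ^ 2 = c' := by rw [hddef, Real.sq_sqrt hc'0]
    nlinarith [hd0, hc'1]
  have hK_pos : 0 < K := Real.sqrt_pos.2 (by
    apply div_pos _ hpmin_pos
    exact mul_pos (by exact_mod_cast hn) hpmax_pos)
  have hsqrtck : ∀ k : ℕ, Real.sqrt (c' ^ k) = d ^ k := by
    intro k
    have : c' ^ k = (d ^ k) ^ 2 := by
      rw [← pow_mul, mul_comm, pow_mul, hddef, Real.sq_sqrt hc'0]
    rw [this, Real.sqrt_sq (pow_nonneg hd0 k)]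
  have frobbound : ∀ (Ls : List (Matrix (Fin n) (Fin n) ℝ)), (∀ B ∈ Ls, B ∈ Set.range M) →
      frob Ls.prod ≤ K * d ^ Ls.length := by
    intro Ls hmem
    have hcol : ∀ b : Fin n, ∑ a, (Ls.prod a b) ^ 2 ≤ c' ^ Ls.length * pmax / pmin := by
      intro b
      have h1 := hVge i₀ (Ls.prod *ᵥ Pi.single b 1)
      have h2 := chain Ls hmem i₀ (Pi.single b 1)
      have hsingle : ∑ a, (Pi.single b 1 : Fin n → ℝ) a ^ 2 = 1 := by
        simp [Pi.single_apply]
      rw [hsingle, mul_one] at h2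
      have hmv : ∀ a, (Ls.prod *ᵥ Pi.single b 1) a = Ls.prod a b := by
        intro a
        simp [Matrix.mulVec, dotProduct, Pi.single_apply, mul_ite]
      rw [le_div_iff₀ hpmin_pos]
      have heq : ∑ a, (Ls.prod a b) ^ 2 = ∑ a, (Ls.prod *ᵥ Pi.single b 1) a ^ 2 := by
        refine Finset.sum_congr rfl fun a _ => by rw [hmv a]
      rw [heq]
      nlinarith [hVeq i₀ (Ls.prod *ᵥ Pi.single b 1)]
    have hfr2 : ∑ a, ∑ b, (Ls.prod a b) ^ 2 ≤ (n : ℝ) * (c' ^ Ls.length * pmax / pmin) := by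
      rw [Finset.sum_comm]
      calc ∑ b, ∑ a, (Ls.prod a b) ^ 2 ≤ ∑ _b : Fin n, c' ^ Ls.length * pmax / pmin :=
            Finset.sum_le_sum fun b _ => hcol b
        _ = (n : ℝ) * (c' ^ Ls.length * pmax / pmin) := by
            rw [Finset.sum_const, Finset.card_univ, Fintype.card_fin, nsmul_eq_mul]
    have : frob Ls.prod ≤ Real.sqrt ((n : ℝ) * (c' ^ Ls.length * pmax / pmin)) :=
      Real.sqrt_le_sqrt hfr2
    refine le_trans this (le_of_eq ?_)
    rw [show (n : ℝ) * (c' ^ Ls.length * pmax / pmin) = ((n : ℝ) * pmax / pmin) * c' ^ Ls.length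
      by ring]
    rw [Real.sqrt_mul (by positivity), hsqrtck]
  -- bound the suprema
  have hsup_le : ∀ k : ℕ, sSup {x : ℝ | ∃ L' : List (Matrix (Fin n) (Fin n) ℝ), L'.length = k ∧
      (∀ B ∈ L', B ∈ Set.range M) ∧ x = frob L'.prod} ≤ K * d ^ k := by
    intro k
    refine Real.sSup_le ?_ (by positivity)
    rintro x ⟨L', hlen, hmem, rfl⟩
    rw [← hlen]
    exact frobbound L' hmem
  have hsup_nonneg : ∀ k : ℕ, 0 ≤ sSup {x : ℝ | ∃ L' : List (Matrix (Fin n) (Fin n) ℝ),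
      L'.length = k ∧ (∀ B ∈ L', B ∈ Set.range M) ∧ x = frob L'.prod} :=
    fun k => Real.sSup_nonneg (by rintro x ⟨L', -, -, rfl⟩; exact Real.sqrt_nonneg _)
  -- conclude
  by_cases hd : d = 0
  · refine limsup_lt_one_of_eventually_le (r := 0) one_pos
      (fun k => Real.rpow_nonneg
      (Real.sSup_nonneg (by rintro x ⟨L', -, -, rfl⟩; exact Real.sqrt_nonneg _)) _) ?_
    filter_upwards [Filter.eventually_ge_atTop 1] with k hk
    have h0 : sSup {x : ℝ | ∃ L' : List (Matrix (Fin n) (Fin n) ℝ), L'.length = k ∧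
        (∀ B ∈ L', B ∈ Set.range M) ∧ x = frob L'.prod} = 0 := by
      refine le_antisymm ?_ (hsup_nonneg k)
      have := hsup_le k
      rw [hd, zero_pow (by omega : k ≠ 0), mul_zero] at this
      exact this
    rw [h0, Real.zero_rpow (one_div_ne_zero (Nat.cast_ne_zero.2 (by omega)))]
  · have hd0' : 0 < d := lt_of_le_of_ne hd0 (Ne.symm hd)
    set r : ℝ := (1 + d) / 2 with hrdef
    have hdr : d < r := by rw [hrdef]; linarith
    have hr1 : r < 1 := by rw [hrdef]; linarith
    refine limsup_lt_one_of_eventually_le (r := r) hr1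
      (fun k => Real.rpow_nonneg
      (Real.sSup_nonneg (by rintro x ⟨L', -, -, rfl⟩; exact Real.sqrt_nonneg _)) _) ?_
    have htend : Filter.Tendsto (fun k : ℕ => K ^ ((1:ℝ)/(k:ℝ))) Filter.atTop (nhds 1) := by
      have h1 : Filter.Tendsto (fun k : ℕ => Real.log K * (1/(k:ℝ))) Filter.atTop (nhds 0) := by
        simpa using tendsto_one_div_atTop_nhds_zero_nat.const_mul (Real.log K)
      have h2 := (Real.continuous_exp.tendsto 0).comp h1
      simp only [Function.comp, Real.exp_zero] at h2
      refine h2.congr fun k => ?_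
      rw [Real.rpow_def_of_pos hK_pos]
      rfl
    have hev : ∀ᶠ k : ℕ in Filter.atTop, K ^ ((1:ℝ)/(k:ℝ)) < r / d :=
      htend.eventually_lt_const (by rw [lt_div_iff₀ hd0']; nlinarith)
    filter_upwards [hev, Filter.eventually_ge_atTop 1] with k hk hk1
    have hkne : (k:ℝ) ≠ 0 := Nat.cast_ne_zero.2 (by omega)
    calc (sSup {x : ℝ | ∃ L' : List (Matrix (Fin n) (Fin n) ℝ), L'.length = k ∧
        (∀ B ∈ L', B ∈ Set.range M) ∧ x = frob L'.prod}) ^ ((1:ℝ)/(k:ℝ))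
        ≤ (K * d ^ k) ^ ((1:ℝ)/(k:ℝ)) :=
          Real.rpow_le_rpow (hsup_nonneg k) (hsup_le k) (by positivity)
      _ = K ^ ((1:ℝ)/(k:ℝ)) * d := by
          rw [Real.mul_rpow hK_pos.le (pow_nonneg hd0 k)]
          congr 1
          rw [← Real.rpow_natCast d k, ← Real.rpow_mul hd0, mul_one_div, div_self hkne,
            Real.rpow_one]
      _ ≤ (r / d) * d := mul_le_mul_of_nonneg_right hk.le hd0
      _ = r := div_mul_cancel₀ r hd
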